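/- Let B : ℝ → ℝ be continuous, 1-periodic, positive. Then for all x, y ∈ ℝ, (ε ∫_{x/ε}^{y/ε} √(B(s)) ds)² converges as ε → 0 to |x−y|² (∫₀¹ √(B(s)) ds)². Moreover this convergence is uniform on compact subsets of ℝ². -/
import Mathlib


open MeasureTheory intervalIntegral Filter

/-- Convergence of the rescaled one-dimensional geodesic distances
`(ε ∫_{x/ε}^{y/ε} √B)² → |x−y|² (∫₀¹ √B)²` as `ε → 0⁺`, pointwise and
uniformly on compact subsets of `ℝ²`. -/
theorem stmt1 (B : ℝ → ℝ) (hBc : Continuous B) (hBper : Function.Periodic B 1)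
    (hBpos : ∀ s, 0 < B s) :
    (∀ x y : ℝ, Tendsto (fun ε : ℝ =>
        (ε * ∫ s in (x / ε)..(y / ε), Real.sqrt (B s)) ^ 2)
      (nhdsWithin 0 (Set.Ioi 0))
      (nhds (|x - y| ^ 2 * (∫ s in (0:ℝ)..1, Real.sqrt (B s)) ^ 2))) ∧
    (∀ K : Set (ℝ × ℝ), IsCompact K →
      TendstoUniformlyOn
        (fun ε (p : ℝ × ℝ) => (ε * ∫ s in (p.1 / ε)..(p.2 / ε), Real.sqrt (B s)) ^ 2)
        (fun p => |p.1 - p.2| ^ 2 * (∫ s in (0:ℝ)..1, Real.sqrt (B s)) ^ 2)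
        (nhdsWithin 0 (Set.Ioi 0)) K) := by
  set c : ℝ := ∫ s in (0:ℝ)..1, Real.sqrt (B s) with hc
  have hcont : Continuous fun s => Real.sqrt (B s) := Real.continuous_sqrt.comp hBc
  have hper : Function.Periodic (fun s => Real.sqrt (B s)) 1 := fun s => by
    simp [hBper s]
  have hint : ∀ a b : ℝ, IntervalIntegrable (fun s => Real.sqrt (B s)) volume a b :=
    fun a b => hcont.intervalIntegrable a b
  set f : ℝ → ℝ := fun t => ∫ s in (0:ℝ)..t, Real.sqrt (B s) with hf
  have hsplit : ∀ x y : ℝ, (∫ s in x..y, Real.sqrt (B s)) = f y - f x := fun x y =>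
    (intervalIntegral.integral_interval_sub_left (hint 0 y) (hint 0 x)).symm
  set g : ℝ → ℝ := fun t => f t - t * c with hgdef
  have hfg : ∀ t, f t = g t + t * c := fun t => by simp [hgdef]
  have hgper : Function.Periodic g 1 := by
    intro t
    have h1 : (∫ s in t..(t+1), Real.sqrt (B s)) = c := by
      rw [hper.intervalIntegral_add_eq t 0]
      simp [hc]
    have h2 := hsplit t (t + 1)
    have h3 : f (t + 1) = f t + c := by rw [h2] at h1; linarith
    simp only [hgdef]
    rw [h3]; ring
  have hfcont : Continuous f := intervalIntegral.continuous_primitive hint 0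
  have hgcont : Continuous g := hfcont.sub (continuous_id.mul continuous_const)
  obtain ⟨C, hC⟩ := (isCompact_Icc (a := (0:ℝ)) (b := 1)).exists_bound_of_continuousOn
    hgcont.continuousOn
  have hM : ∀ t, |g t| ≤ C := by
    intro t
    have hgt : g t = g (Int.fract t) := by
      have := hgper.sub_zsmul_eq (x := t) ⌊t⌋
      simp only [zsmul_eq_mul, mul_one] at this
      rw [Int.fract]
      exact this.symm
    rw [hgt]
    have := hC (Int.fract t) ⟨Int.fract_nonneg t, (Int.fract_lt_one t).le⟩
    simpa [Real.norm_eq_abs] using this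
  have hC0 : 0 ≤ C := (abs_nonneg _).trans (hM 0)
  have hc0 : (0:ℝ) ≤ c := by
    rw [hc]
    exact intervalIntegral.integral_nonneg (by norm_num) (fun s _ => Real.sqrt_nonneg _)
  have key : ∀ ε : ℝ, 0 < ε → ∀ x y : ℝ,
      |ε * (∫ s in (x / ε)..(y / ε), Real.sqrt (B s)) - (y - x) * c| ≤ 2 * C * ε := by
    intro ε hε x y
    rw [hsplit]
    have h1 : ε * (f (y / ε) - f (x / ε)) - (y - x) * c
        = ε * (g (y / ε) - g (x / ε)) := by
      rw [hfg (y / ε), hfg (x / ε)]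
      field_simp
      ring
    rw [h1, abs_mul, abs_of_pos hε]
    have hy := abs_le.1 (hM (y / ε))
    have hx := abs_le.1 (hM (x / ε))
    have h2 : |g (y / ε) - g (x / ε)| ≤ 2 * C :=
      abs_sub_le_iff.2 ⟨by linarith, by linarith⟩
    nlinarith
  have main : ∀ K : Set (ℝ × ℝ), IsCompact K →
      TendstoUniformlyOn
        (fun ε (p : ℝ × ℝ) => (ε * ∫ s in (p.1 / ε)..(p.2 / ε), Real.sqrt (B s)) ^ 2)
        (fun p => |p.1 - p.2| ^ 2 * c ^ 2)
        (nhdsWithin 0 (Set.Ioi 0)) K := by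
    intro K hK
    obtain ⟨R, hR⟩ := hK.isBounded.subset_closedBall 0
    rw [Metric.tendstoUniformlyOn_iff]
    intro δ hδ
    have hφ : Tendsto (fun ε : ℝ => 2 * C * ε * (2 * C * ε + 2 * (2 * R * c)))
        (nhdsWithin 0 (Set.Ioi 0)) (nhds 0) := by
      have hcφ : Continuous fun ε : ℝ => 2 * C * ε * (2 * C * ε + 2 * (2 * R * c)) :=
        (continuous_const.mul continuous_id).mul
          ((continuous_const.mul continuous_id).add continuous_const)
      have h0 := hcφ.tendsto 0
      simp only [mul_zero, zero_mul] at h0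
      exact h0.mono_left nhdsWithin_le_nhds
    have hev : ∀ᶠ ε in nhdsWithin 0 (Set.Ioi 0),
        2 * C * ε * (2 * C * ε + 2 * (2 * R * c)) < δ :=
      hφ.eventually_lt_const hδ
    filter_upwards [self_mem_nhdsWithin, hev] with ε hε hεδ
    intro p hp
    have hεpos : (0:ℝ) < ε := hε
    have hkey := key ε hεpos p.1 p.2
    set A := ε * ∫ s in (p.1 / ε)..(p.2 / ε), Real.sqrt (B s) with hA
    set D := (p.2 - p.1) * c with hD
    have htarget : |p.1 - p.2| ^ 2 * c ^ 2 = D ^ 2 := by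
      rw [hD, sq_abs]; ring
    have hp1 : |p.1| ≤ R := by
      have h1 := norm_fst_le p
      have h2 : ‖p‖ ≤ R := by simpa [Metric.mem_closedBall, dist_zero_right] using hR hp
      simpa [Real.norm_eq_abs] using h1.trans h2
    have hp2 : |p.2| ≤ R := by
      have h1 := norm_snd_le p
      have h2 : ‖p‖ ≤ R := by simpa [Metric.mem_closedBall, dist_zero_right] using hR hp
      simpa [Real.norm_eq_abs] using h1.trans h2
    have hDle : |D| ≤ 2 * R * c := by
      rw [hD, abs_mul, abs_of_nonneg hc0]
      have : |p.2 - p.1| ≤ 2 * R := by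
        have := abs_sub (p.2) (p.1)
        calc |p.2 - p.1| ≤ |p.2| + |p.1| := abs_sub _ _
          _ ≤ 2 * R := by linarith
      nlinarith [abs_nonneg (p.2 - p.1)]
    have h3 : |D ^ 2 - A ^ 2| ≤ |A - D| * (|A - D| + 2 * |D|) := by
      have hid : D ^ 2 - A ^ 2 = -((A - D) * ((A - D) + 2 * D)) := by ring
      rw [hid, abs_neg, abs_mul]
      have : |A - D + 2 * D| ≤ |A - D| + 2 * |D| := by
        calc |A - D + 2 * D| ≤ |A - D| + |2 * D| := abs_add_le _ _
          _ = |A - D| + 2 * |D| := by rw [abs_mul, abs_two]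
      exact mul_le_mul_of_nonneg_left this (abs_nonneg _)
    have h4 : |A - D| * (|A - D| + 2 * |D|)
        ≤ (2 * C * ε) * (2 * C * ε + 2 * (2 * R * c)) := by
      apply mul_le_mul hkey (by linarith) (by positivity)
      nlinarith
    rw [Real.dist_eq, htarget]
    calc |D ^ 2 - A ^ 2| ≤ |A - D| * (|A - D| + 2 * |D|) := h3
      _ ≤ (2 * C * ε) * (2 * C * ε + 2 * (2 * R * c)) := h4
      _ < δ := hεδ
  refine ⟨fun x y => ?_, main⟩
  have := (main {(x, y)} isCompact_singleton).tendsto_at (Set.mem_singleton _)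
  simpa using this
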